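/- Let L ≥ 2 be a natural number, let σ : {0,…,L−1} → ℝ, and let i satisfy i + 1 ≤ L − 1 with σ_i · σ_{i+1} < 0. Define the merged sequence τ : {0,…,L−2} → ℝ by τ_k = σ_k for k < i, τ_i = σ_i + σ_{i+1}, and τ_k = σ_{k+1} for k > i. Then TV(τ) = TV(σ) − 2·min(|σ_i|, |σ_{i+1}|) and Q(τ) ≤ Q(σ), where TV(σ) = Σ_k |σ_k| and Q(σ) = Σ_{j<k} |σ_j|·|σ_k|. -/

import Mathlib

lemma glimm_shift_Ico (a b : ℕ) (f : ℕ → ℝ) :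
    ∑ k ∈ Finset.Ico a b, f (k + 1) = ∑ k ∈ Finset.Ico (a + 1) (b + 1), f k := by
  rw [← Finset.map_add_right_Ico, Finset.sum_map]
  rfl

lemma glimm_sq_sum_identity (f : ℕ → ℝ) (n : ℕ) :
    (∑ k ∈ Finset.range n, f k) ^ 2
      = (∑ k ∈ Finset.range n, f k ^ 2)
        + 2 * ∑ j ∈ Finset.range n, ∑ k ∈ Finset.Ico (j + 1) n, f j * f k := by
  induction n with
  | zero => simp
  | succ n ih =>
    have h1 : ∀ j ∈ Finset.range n,
        ∑ k ∈ Finset.Ico (j + 1) (n + 1), f j * f k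
          = (∑ k ∈ Finset.Ico (j + 1) n, f j * f k) + f j * f n := by
      intro j hj
      exact Finset.sum_Ico_succ_top (Finset.mem_range.mp hj) _
    rw [Finset.sum_range_succ, Finset.sum_range_succ (fun k => f k ^ 2),
      Finset.sum_range_succ (fun j => ∑ k ∈ Finset.Ico (j + 1) (n + 1), f j * f k),
      Finset.sum_congr rfl h1, Finset.sum_add_distrib, ← Finset.sum_mul]
    simp only [Finset.Ico_self, Finset.sum_empty, add_zero]
    linear_combination ih

lemma glimm_split_tau (L i : ℕ) (hL : 2 ≤ L) (hi : i + 1 ≤ L - 1) (F G : ℕ → ℝ)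
    (hlt : ∀ k < i, F k = G k) (hgt : ∀ k, i < k → F k = G (k + 1)) :
    ∑ k ∈ Finset.range (L - 1), F k
      = (∑ k ∈ Finset.range i, G k) + F i + ∑ k ∈ Finset.Ico (i + 2) L, G k := by
  have hi' : i ≤ L - 1 := le_trans (Nat.le_succ i) hi
  have hiL : i < L - 1 := lt_of_lt_of_le (Nat.lt_succ_self i) hi
  have hL1 : L - 1 + 1 = L := by omega
  rw [Finset.range_eq_Ico, ← Finset.sum_Ico_consecutive F (Nat.zero_le i) hi',
    Finset.sum_eq_sum_Ico_succ_bot hiL]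
  have h2 : ∑ k ∈ Finset.Ico (i + 1) (L - 1), F k
      = ∑ k ∈ Finset.Ico (i + 1) (L - 1), G (k + 1) := by
    refine Finset.sum_congr rfl fun k hk => hgt k ?_
    exact lt_of_lt_of_le (Nat.lt_succ_self i) (Finset.mem_Ico.mp hk).1
  have h1 : ∑ k ∈ Finset.Ico 0 i, F k = ∑ k ∈ Finset.range i, G k := by
    rw [← Finset.range_eq_Ico]
    exact Finset.sum_congr rfl fun k hk => hlt k (Finset.mem_range.mp hk)
  rw [h2, glimm_shift_Ico, hL1, h1, Finset.range_eq_Ico]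
  ring

lemma glimm_split_sigma (L i : ℕ) (hL : 2 ≤ L) (hi : i + 1 ≤ L - 1) (G : ℕ → ℝ) :
    ∑ k ∈ Finset.range L, G k
      = (∑ k ∈ Finset.range i, G k) + G i + G (i + 1) + ∑ k ∈ Finset.Ico (i + 2) L, G k := by
  have h1 : i ≤ L := by omega
  have h2 : i < L := by omega
  have h3 : i + 1 < L := by omega
  rw [Finset.range_eq_Ico, ← Finset.sum_Ico_consecutive G (Nat.zero_le i) h1,
    Finset.sum_eq_sum_Ico_succ_bot h2, Finset.sum_eq_sum_Ico_succ_bot h3,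
    ← Finset.range_eq_Ico]
  ring

lemma glimm_abs_add_of_mul_neg {a b : ℝ} (h : a * b < 0) :
    |a + b| = |a| + |b| - 2 * min |a| |b| := by
  rcases min_cases |a| |b| with ⟨h1, h2⟩ | ⟨h1, h2⟩ <;>
    rcases abs_cases a with ⟨p, q⟩ | ⟨p, q⟩ <;>
    rcases abs_cases b with ⟨r, s⟩ | ⟨r, s⟩ <;>
    rcases abs_cases (a + b) with ⟨t, u⟩ | ⟨t, u⟩ <;>
    nlinarith

/-- Interaction with cancellation: merging two adjacent waves of opposite sign
decreases the total variation `TV = Σ |σ k|` by twice the cancelled amount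
`min (|σ i|) (|σ (i+1)|)`, and does not increase the Glimm interaction
functional `Q = Σ_{j<k} |σ j|·|σ k|`. -/
theorem glimm_functional_interaction_cancellation
    (L : ℕ) (hL : 2 ≤ L) (σ τ : ℕ → ℝ) (i : ℕ) (hi : i + 1 ≤ L - 1)
    (hsign : σ i * σ (i + 1) < 0)
    (hτlt : ∀ k < i, τ k = σ k)
    (hτi : τ i = σ i + σ (i + 1))
    (hτgt : ∀ k, i < k → τ k = σ (k + 1)) :
    (∑ k ∈ Finset.range (L - 1), |τ k|)
      = (∑ k ∈ Finset.range L, |σ k|) - 2 * min |σ i| |σ (i + 1)| ∧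
    (∑ j ∈ Finset.range (L - 1), ∑ k ∈ Finset.Ico (j + 1) (L - 1), |τ j| * |τ k|)
      ≤ (∑ j ∈ Finset.range L, ∑ k ∈ Finset.Ico (j + 1) L, |σ j| * |σ k|) := by
  set a := σ i with ha
  set b := σ (i + 1) with hb
  -- total variation part
  have hTVτ := glimm_split_tau L i hL hi (fun k => |τ k|) (fun k => |σ k|)
    (fun k hk => by simp [hτlt k hk]) (fun k hk => by simp [hτgt k hk])
  have hTVσ := glimm_split_sigma L i hL hi (fun k => |σ k|)
  have habs : |τ i| = |a| + |b| - 2 * min |a| |b| := by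
    rw [hτi]; exact glimm_abs_add_of_mul_neg hsign
  have hTV : (∑ k ∈ Finset.range (L - 1), |τ k|)
      = (∑ k ∈ Finset.range L, |σ k|) - 2 * min |a| |b| := by
    rw [hTVτ, hTVσ, habs]; ring
  refine ⟨hTV, ?_⟩
  -- interaction functional part
  have hPτ := glimm_split_tau L i hL hi (fun k => |τ k| ^ 2) (fun k => |σ k| ^ 2)
    (fun k hk => by simp [hτlt k hk]) (fun k hk => by simp [hτgt k hk])
  have hPσ := glimm_split_sigma L i hL hi (fun k => |σ k| ^ 2)
  have hP : (∑ k ∈ Finset.range (L - 1), |τ k| ^ 2)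
      = (∑ k ∈ Finset.range L, |σ k| ^ 2) + 2 * (a * b) := by
    rw [hPτ, hPσ]
    have : |τ i| ^ 2 = |a| ^ 2 + |b| ^ 2 + 2 * (a * b) := by
      rw [hτi, sq_abs, sq_abs, sq_abs]; ring
    rw [this]; ring
  have hQτ := glimm_sq_sum_identity (fun k => |τ k|) (L - 1)
  have hQσ := glimm_sq_sum_identity (fun k => |σ k|) L
  have hSge : |a| + |b| ≤ ∑ k ∈ Finset.range L, |σ k| := by
    have hsub : ({i, i + 1} : Finset ℕ) ⊆ Finset.range L := by
      intro k hk
      simp only [Finset.mem_insert, Finset.mem_singleton] at hk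
      rcases hk with rfl | rfl <;> simp [Finset.mem_range] <;> omega
    have := Finset.sum_le_sum_of_subset_of_nonneg hsub
      (fun k _ _ => abs_nonneg (σ k))
    rwa [Finset.sum_pair (by omega : i ≠ i + 1)] at this
  have hS'nonneg : (0 : ℝ) ≤ ∑ k ∈ Finset.range (L - 1), |τ k| :=
    Finset.sum_nonneg fun k _ => abs_nonneg (τ k)
  have hab : |a| * |b| = -(a * b) := by
    rw [← abs_mul]; exact abs_of_neg hsign
  rcases min_cases |a| |b| with ⟨h1, h2⟩ | ⟨h1, h2⟩ <;>
    nlinarith [abs_nonneg a, abs_nonneg b, hTV, hP, hQτ, hQσ, hSge, hS'nonneg, hab,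
      mul_nonneg (abs_nonneg a) hS'nonneg, mul_nonneg (abs_nonneg b) hS'nonneg]
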